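/- (Uniqueness of concise subsets) For the inference relation ⊢ induced by regular AACBR, if D has a concise subset w.r.t. D, then it is unique: any two concise subsets of D w.r.t. D are equal. -/

import Mathlib

open Classical

/-- A case: a characterisation together with an outcome. The two possible outcomes
`Y = {δ, δ̄}` are modelled by `Bool`. -/
abbrev Case (X : Type*) := X × Bool

/-- An argument of a mined AF: either a labelled case or the (unique) new case. -/
abbrev Arg (X : Type*) := Case X ⊕ Unit

/-- Attack between labelled cases relative to the casebase-plus-default `CB`:
`a` attacks `b` iff they have different outcomes, `a` is at least as specific as `b`,
and no case in `CB` with `a`'s outcome lies strictly between them. -/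
def caseAttacks {X : Type*} [PartialOrder X] (CB : Set (Case X)) (a b : Case X) : Prop :=
  a.2 ≠ b.2 ∧ b.1 ≤ a.1 ∧ ¬ ∃ g ∈ CB, g.1 < a.1 ∧ b.1 < g.1 ∧ g.2 = a.2

/-- The attack relation of the regular AF mined from casebase-plus-default `CB` and
new case characterisation `N`: the new case attacks exactly the irrelevant cases. -/
def attack {X : Type*} [PartialOrder X] (CB : Set (Case X)) (N : X) :
    Arg X → Arg X → Prop
  | Sum.inl a, Sum.inl b => caseAttacks CB a b
  | Sum.inr _, Sum.inl b => ¬ b.1 ≤ N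
  | _, Sum.inr _ => False

/-- The arguments of the AF mined from `D` (with default argument `dflt`) and a new case. -/
def minedArgs {X : Type*} (D : Set (Case X)) (dflt : Case X) : Set (Arg X) :=
  (Sum.inl '' (insert dflt D)) ∪ {Sum.inr ()}

/-- `E` defends `a` in `(Args, att)` iff `a ∈ Args` and every attacker of `a` in `Args`
is attacked by some member of `E`. -/
def Defends {A : Type*} (Args : Set A) (att : A → A → Prop) (E : Set A) (a : A) : Prop :=
  a ∈ Args ∧ ∀ b ∈ Args, att b a → ∃ c ∈ E, att c b

/-- Approximation sequence of the grounded extension: `G 0` is the set of unattacked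
arguments, `G (i+1)` the set of arguments defended by `G i`. -/
def Gseq {A : Type*} (Args : Set A) (att : A → A → Prop) : ℕ → Set A
  | 0 => {a | a ∈ Args ∧ ∀ b ∈ Args, ¬ att b a}
  | i + 1 => {a | Defends Args att (Gseq Args att i) a}

/-- The grounded extension. -/
def grounded {A : Type*} (Args : Set A) (att : A → A → Prop) : Set A :=
  ⋃ i, Gseq Args att i

/-- Grounded extension of the regular AF mined from `D`, default `dflt`, and new case `N`. -/
def minedGrounded {X : Type*} [PartialOrder X] (D : Set (Case X)) (dflt : Case X)
    (N : X) : Set (Arg X) :=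
  grounded (minedArgs D dflt) (attack (insert dflt D) N)

/-- The AACBR-predicted outcome for `N` given `D`: the default outcome iff the default
argument is in the grounded extension, the opposite outcome otherwise. -/
noncomputable def aacbrOutcome {X : Type*} [PartialOrder X] (D : Set (Case X))
    (dflt : Case X) (N : X) : Bool :=
  if Sum.inl dflt ∈ minedGrounded D dflt N then dflt.2 else !dflt.2

/-- A casebase is coherent iff no two of its cases share a characterisation while
having different outcomes. -/
def Coherent {X : Type*} (D : Set (Case X)) : Prop :=
  ∀ a ∈ D, ∀ b ∈ D, a.1 = b.1 → a.2 = b.2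

/-- An example is surprising w.r.t. `D'` iff without it AACBR predicts a different
outcome for its characterisation. -/
noncomputable def Surprising {X : Type*} [PartialOrder X] (dflt : Case X)
    (D' : Set (Case X)) (e : Case X) : Prop :=
  aacbrOutcome (D' \ {e}) dflt e.1 ≠ e.2

/-- An example is sufficient w.r.t. `D'` iff adding it makes AACBR predict its outcome. -/
noncomputable def Sufficient {X : Type*} [PartialOrder X] (dflt : Case X)
    (D' : Set (Case X)) (e : Case X) : Prop :=
  aacbrOutcome (insert e D') dflt e.1 = e.2

/-- An example is includable w.r.t. `D'` iff it is both surprising and sufficient. -/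
noncomputable def Includable {X : Type*} [PartialOrder X] (dflt : Case X)
    (D' : Set (Case X)) (e : Case X) : Prop :=
  Surprising dflt D' e ∧ Sufficient dflt D' e

/-- `S'` is concise w.r.t. `S` iff `S'` is exactly the set of examples of `S` that are
includable w.r.t. `S'`. -/
noncomputable def Concise {X : Type*} [PartialOrder X] (dflt : Case X)
    (S' S : Set (Case X)) : Prop :=
  S' = {e ∈ S | Includable dflt S' e}


set_option linter.unusedSectionVars false
section AF
variable {A : Type*} (Args : Set A) (att : A → A → Prop)

lemma Gseq_subset : ∀ i, Gseq Args att i ⊆ Args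
  | 0, _, ha => ha.1
  | _+1, _, ha => ha.1

lemma Gseq_succ_mono : ∀ i, Gseq Args att i ⊆ Gseq Args att (i+1) := by
  intro i
  induction i with
  | zero =>
    intro a ha
    exact ⟨ha.1, fun b hb hba => absurd hba (ha.2 b hb)⟩
  | succ i ih =>
    intro a ha
    refine ⟨ha.1, fun b hb hba => ?_⟩
    obtain ⟨c, hc, hcb⟩ := ha.2 b hb hba
    exact ⟨c, ih hc, hcb⟩

lemma Gseq_mono {i j : ℕ} (h : i ≤ j) : Gseq Args att i ⊆ Gseq Args att j := by
  induction h with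
  | refl => exact subset_rfl
  | step _ ih => exact ih.trans (Gseq_succ_mono Args att _)

lemma Gseq_not_attacked :
    ∀ i, ∀ a ∈ Gseq Args att i, ∀ j, ∀ b ∈ Gseq Args att j, ¬ att b a := by
  intro i
  induction i with
  | zero => intro a ha j b hb hba; exact ha.2 b (Gseq_subset Args att j hb) hba
  | succ i ih =>
    intro a ha j b hb hba
    obtain ⟨c, hc, hcb⟩ := ha.2 b (Gseq_subset Args att j hb) hba
    cases j with
    | zero => exact hb.2 c (Gseq_subset Args att i hc) hcb
    | succ j =>
      obtain ⟨d, hd, hdc⟩ := hb.2 c (Gseq_subset Args att i hc) hcb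
      exact ih c hc j d hd hdc

end AF

section Mined
variable {X : Type*} [PartialOrder X]

lemma mem_minedArgs_inl {S : Set (Case X)} {dflt c : Case X} :
    Sum.inl c ∈ minedArgs S dflt ↔ c ∈ insert dflt S := by
  simp [minedArgs]

lemma inr_mem_minedArgs {S : Set (Case X)} {dflt : Case X} :
    (Sum.inr () : Arg X) ∈ minedArgs S dflt := by
  simp [minedArgs]

lemma inr_mem_G0 (S : Set (Case X)) (dflt : Case X) (N : X) :
    (Sum.inr () : Arg X) ∈ Gseq (minedArgs S dflt) (attack (insert dflt S) N) 0 := by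
  refine ⟨inr_mem_minedArgs, fun b _ hb => ?_⟩
  cases b with
  | inl a => exact hb
  | inr u => exact hb

lemma irrelevant_not_mem {S : Set (Case X)} {dflt : Case X} {N : X} {c : Case X}
    (hc : ¬ c.1 ≤ N) :
    ∀ i, Sum.inl c ∉ Gseq (minedArgs S dflt) (attack (insert dflt S) N) i := by
  intro i hmem
  cases i with
  | zero => exact hmem.2 (Sum.inr ()) inr_mem_minedArgs hc
  | succ i =>
    obtain ⟨z, _, hz⟩ := hmem.2 (Sum.inr ()) inr_mem_minedArgs hc
    cases z with
    | inl a => exact hz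
    | inr u => exact hz

end Mined
section Local
variable {X : Type*} [PartialOrder X]

/-- Restriction of a casebase to the cases relevant to `N`. -/
def restrict (S : Set (Case X)) (N : X) : Set (Case X) := {c ∈ S | c.1 ≤ N}

lemma caseAttacks_restrict (S : Set (Case X)) (dflt : Case X) (N : X)
    {a b : Case X} (ha : a.1 ≤ N) :
    caseAttacks (insert dflt S) a b ↔ caseAttacks (insert dflt (restrict S N)) a b := by
  unfold caseAttacks
  constructor
  · rintro ⟨h1, h2, h3⟩
    refine ⟨h1, h2, fun ⟨g, hg, hg1, hg2, hg3⟩ => h3 ⟨g, ?_, hg1, hg2, hg3⟩⟩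
    rcases hg with rfl | hg
    · exact Set.mem_insert _ _
    · exact Set.mem_insert_of_mem _ hg.1
  · rintro ⟨h1, h2, h3⟩
    refine ⟨h1, h2, fun ⟨g, hg, hg1, hg2, hg3⟩ => h3 ⟨g, ?_, hg1, hg2, hg3⟩⟩
    rcases hg with rfl | hg
    · exact Set.mem_insert _ _
    · exact Set.mem_insert_of_mem _ ⟨hg, le_of_lt (lt_of_lt_of_le hg1 ha)⟩

variable (S : Set (Case X)) (dflt : Case X) (N : X)

lemma restrict_args_subset :
    minedArgs (restrict S N) dflt ⊆ minedArgs S dflt := by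
  intro a ha
  rcases a with a | u
  · rw [mem_minedArgs_inl] at ha ⊢
    rcases ha with rfl | ha
    · exact Set.mem_insert _ _
    · exact Set.mem_insert_of_mem _ ha.1
  · exact inr_mem_minedArgs

lemma restrict_rel (hdN : dflt.1 ≤ N) {c : Case X}
    (hc : c ∈ insert dflt (restrict S N)) : c.1 ≤ N := by
  rcases hc with rfl | hc
  · exact hdN
  · exact hc.2

lemma Gseq_restrict_fwd (hdN : dflt.1 ≤ N) :
    ∀ i a, a ∈ Gseq (minedArgs (restrict S N) dflt) (attack (insert dflt (restrict S N)) N) i →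
      a ∈ Gseq (minedArgs S dflt) (attack (insert dflt S) N) (i+1) := by
  intro i
  induction i with
  | zero =>
    intro a ha
    refine ⟨restrict_args_subset S dflt N ha.1, fun b hb hba => ?_⟩
    rcases b with b | u
    · rw [mem_minedArgs_inl] at hb
      by_cases hbN : b.1 ≤ N
      · -- relevant attacker: contradicts unattackedness in the restricted AF
        exfalso
        rcases a with a | u
        · have haN : a.1 ≤ N := restrict_rel S dflt N hdN (mem_minedArgs_inl.mp ha.1)
          have hb' : b ∈ insert dflt (restrict S N) := by
            rcases hb with rfl | hb
            · exact Set.mem_insert _ _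
            · exact Set.mem_insert_of_mem _ ⟨hb, hbN⟩
          exact ha.2 (Sum.inl b) (mem_minedArgs_inl.mpr hb')
            ((caseAttacks_restrict S dflt N hbN).mp hba)
        · exact hba
      · exact ⟨Sum.inr (), inr_mem_G0 S dflt N, hbN⟩
    · -- the new case does not attack a (a is relevant or the new case)
      exfalso
      rcases a with a | u
      · exact hba (restrict_rel S dflt N hdN (mem_minedArgs_inl.mp ha.1))
      · exact hba
  | succ i ih =>
    intro a ha
    refine ⟨restrict_args_subset S dflt N ha.1, fun b hb hba => ?_⟩
    rcases b with b | u
    · rw [mem_minedArgs_inl] at hb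
      by_cases hbN : b.1 ≤ N
      · rcases a with a | u
        · have haN : a.1 ≤ N := restrict_rel S dflt N hdN (mem_minedArgs_inl.mp ha.1)
          have hb' : b ∈ insert dflt (restrict S N) := by
            rcases hb with rfl | hb
            · exact Set.mem_insert _ _
            · exact Set.mem_insert_of_mem _ ⟨hb, hbN⟩
          obtain ⟨z, hz, hzb⟩ := ha.2 (Sum.inl b) (mem_minedArgs_inl.mpr hb')
            ((caseAttacks_restrict S dflt N hbN).mp hba)
          rcases z with z | u
          · have hzN : z.1 ≤ N := restrict_rel S dflt N hdN (mem_minedArgs_inl.mp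
              (Gseq_subset _ _ i hz))
            exact ⟨Sum.inl z, ih _ hz, (caseAttacks_restrict S dflt N hzN).mpr hzb⟩
          · exact absurd hbN hzb
        · exact absurd hba id
      · exact ⟨Sum.inr (), Gseq_mono _ _ (Nat.zero_le _) (inr_mem_G0 S dflt N), hbN⟩
    · exfalso
      rcases a with a | u
      · exact hba (restrict_rel S dflt N hdN (mem_minedArgs_inl.mp ha.1))
      · exact hba

lemma Gseq_restrict_bwd (hdN : dflt.1 ≤ N) :
    ∀ i a, a ∈ Gseq (minedArgs S dflt) (attack (insert dflt S) N) i →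
      a ∈ Gseq (minedArgs (restrict S N) dflt) (attack (insert dflt (restrict S N)) N) i := by
  intro i
  induction i with
  | zero =>
    intro a ha
    have haA : a ∈ minedArgs (restrict S N) dflt := by
      rcases a with a | u
      · have haC := mem_minedArgs_inl.mp ha.1
        have haN : a.1 ≤ N := by
          by_contra h
          exact ha.2 (Sum.inr ()) inr_mem_minedArgs h
        rw [mem_minedArgs_inl]
        rcases haC with rfl | haC
        · exact Set.mem_insert _ _
        · exact Set.mem_insert_of_mem _ ⟨haC, haN⟩
      · exact inr_mem_minedArgs
    refine ⟨haA, fun b hb hba => ?_⟩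
    rcases a with a | u
    · rcases b with b | u
      · have hbN : b.1 ≤ N := restrict_rel S dflt N hdN (mem_minedArgs_inl.mp hb)
        exact ha.2 (Sum.inl b) (restrict_args_subset S dflt N hb)
          ((caseAttacks_restrict S dflt N hbN).mpr hba)
      · exact hba (restrict_rel S dflt N hdN (mem_minedArgs_inl.mp haA))
    · cases b <;> exact hba.elim
  | succ i ih =>
    intro a ha
    have haA : a ∈ minedArgs (restrict S N) dflt := by
      rcases a with a | u
      · have haC := mem_minedArgs_inl.mp ha.1
        have haN : a.1 ≤ N := by
          by_contra h
          exact irrelevant_not_mem h (i+1) ha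
        rw [mem_minedArgs_inl]
        rcases haC with rfl | haC
        · exact Set.mem_insert _ _
        · exact Set.mem_insert_of_mem _ ⟨haC, haN⟩
      · exact inr_mem_minedArgs
    refine ⟨haA, fun b hb hba => ?_⟩
    rcases a with a | u
    · rcases b with b | u
      · have hbN : b.1 ≤ N := restrict_rel S dflt N hdN (mem_minedArgs_inl.mp hb)
        obtain ⟨z, hz, hzb⟩ := ha.2 (Sum.inl b) (restrict_args_subset S dflt N hb)
          ((caseAttacks_restrict S dflt N hbN).mpr hba)
        rcases z with z | u
        · have hzN : z.1 ≤ N := by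
            by_contra h
            exact irrelevant_not_mem h i hz
          exact ⟨Sum.inl z, ih _ hz, (caseAttacks_restrict S dflt N hzN).mp hzb⟩
        · exact absurd hbN hzb
      · exact absurd (restrict_rel S dflt N hdN (mem_minedArgs_inl.mp haA)) hba
    · cases b <;> exact hba.elim

lemma aacbr_restrict (hdN : dflt.1 ≤ N) :
    aacbrOutcome S dflt N = aacbrOutcome (restrict S N) dflt N := by
  unfold aacbrOutcome
  congr 1
  refine propext ⟨fun h => ?_, fun h => ?_⟩
  · obtain ⟨T, ⟨i, rfl⟩, hi⟩ := h
    exact Set.mem_iUnion.mpr ⟨i, Gseq_restrict_bwd S dflt N hdN i _ hi⟩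
  · obtain ⟨T, ⟨i, rfl⟩, hi⟩ := h
    exact Set.mem_iUnion.mpr ⟨i+1, Gseq_restrict_fwd S dflt N hdN i _ hi⟩

lemma aacbr_congr {S T : Set (Case X)} (dflt : Case X) {N : X} (hdN : dflt.1 ≤ N)
    (h : restrict S N = restrict T N) :
    aacbrOutcome S dflt N = aacbrOutcome T dflt N := by
  rw [aacbr_restrict S dflt N hdN, aacbr_restrict T dflt N hdN, h]

end Local
set_option maxHeartbeats 1000000
section Exact
variable {X : Type*} [PartialOrder X]

lemma bool_eq_not {a b : Bool} (h : a ≠ b) : a = !b := by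
  cases a <;> cases b <;> simp_all

lemma bool_ne_not (y : Bool) : y ≠ !y := by cases y <;> simp

lemma exists_uniform_stage {α : Type*} (Q : α → ℕ → Prop)
    (mono : ∀ d i j, i ≤ j → Q d i → Q d j) :
    ∀ F : Finset α, (∀ d ∈ F, ∃ i, Q d i) → ∃ k, ∀ d ∈ F, Q d k := by
  intro F
  induction F using Finset.induction_on with
  | empty => exact fun _ => ⟨0, by simp⟩
  | @insert a s ha ih =>
    intro h
    obtain ⟨i, hi⟩ := h a (Finset.mem_insert_self a s)
    obtain ⟨k, hk⟩ := ih fun d hd => h d (Finset.mem_insert_of_mem hd)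
    refine ⟨max i k, fun d hd => ?_⟩
    rcases Finset.mem_insert.mp hd with rfl | hd
    · exact mono _ _ _ (le_max_left _ _) hi
    · exact mono _ _ _ (le_max_right _ _) (hk d hd)

lemma claim_i (S : Set (Case X)) (hfin : S.Finite) (dflt : Case X) (N : X) (y : Bool)
    (hNy : (N, y) ∈ insert dflt S) (hny : (N, !y) ∉ insert dflt S) :
    ∀ n (b : Case X), b ∈ insert dflt S → b.1 ≤ N → b.2 = !y →
      (((hfin.insert dflt).toFinset.filter (fun c => b.1 < c.1)).card < n) →
      ∃ c ∈ insert dflt S, c.1 ≤ N ∧ c.2 = y ∧ caseAttacks (insert dflt S) c b ∧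
        ∃ i, Sum.inl c ∈ Gseq (minedArgs S dflt) (attack (insert dflt S) N) i := by
  intro n
  induction n with
  | zero => intro b _ _ _ hcard; exact absurd hcard (Nat.not_lt_zero _)
  | succ n ih =>
    intro b hbCB hbN hb2 hcard
    have hbne : b ≠ (N, !y) := fun h => hny (h ▸ hbCB)
    have hblt : b.1 < N :=
      lt_of_le_of_ne hbN (fun h => hbne (Prod.ext_iff.mpr ⟨h, hb2⟩))
    set U := (hfin.insert dflt).toFinset.filter
        (fun c => c.2 = y ∧ b.1 < c.1 ∧ c.1 ≤ N) with hUdef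
    have hNyU : (N, y) ∈ U := by
      rw [hUdef, Finset.mem_filter]
      exact ⟨(hfin.insert dflt).mem_toFinset.mpr hNy, rfl, hblt, le_refl N⟩
    have hne : (U.image Prod.fst).Nonempty := ⟨N, Finset.mem_image_of_mem _ hNyU⟩
    obtain ⟨x, hxmem, hxmin⟩ := (U.image Prod.fst).exists_minimal hne
    obtain ⟨c, hcU, hcx⟩ := Finset.mem_image.mp hxmem
    rw [hUdef, Finset.mem_filter] at hcU
    obtain ⟨hcF, hc2, hbc, hcN⟩ := hcU
    have hcCB : c ∈ insert dflt S := (hfin.insert dflt).mem_toFinset.mp hcF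
    have hmin : ∀ g : Case X, g ∈ insert dflt S → g.2 = y → b.1 < g.1 → g.1 ≤ N →
        g.1 < c.1 → False := by
      intro g hg hg2 hbg hgN hlt
      rw [hcx] at hlt
      refine (fun hy : g.1 ∈ U.image Prod.fst => lt_irrefl _ (lt_of_lt_of_le hlt (hxmin hy hlt.le))) ?_
      refine Finset.mem_image_of_mem _ ?_
      rw [hUdef, Finset.mem_filter]
      exact ⟨(hfin.insert dflt).mem_toFinset.mpr hg, hg2, hbg, hgN⟩
    have hatt : caseAttacks (insert dflt S) c b := by
      refine ⟨?_, le_of_lt hbc, ?_⟩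
      · rw [hc2, hb2]; exact bool_ne_not y
      · rintro ⟨g, hg, hg1, hg2, hg3⟩
        exact hmin g hg (hg3.trans hc2) hg2 (le_of_lt (lt_of_lt_of_le hg1 hcN)) hg1
    have hdef : ∀ d : Case X, d ∈ insert dflt S → caseAttacks (insert dflt S) d c →
        d.1 ≤ N → ∃ i, ∃ z ∈ Gseq (minedArgs S dflt) (attack (insert dflt S) N) i,
          attack (insert dflt S) N z (Sum.inl d) := by
      intro d hdCB hdc hdN
      have hd2 : d.2 = !y := by
        have h := hdc.1
        rw [hc2] at h
        exact bool_eq_not (Ne.symm (Ne.symm h))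
      have hbd : b.1 < d.1 := lt_of_lt_of_le hbc hdc.2.1
      have hsub : (hfin.insert dflt).toFinset.filter (fun c => d.1 < c.1) ⊂
          (hfin.insert dflt).toFinset.filter (fun c => b.1 < c.1) := by
        refine Finset.ssubset_def.mpr ⟨?_, ?_⟩
        · intro z hz
          rw [Finset.mem_filter] at hz ⊢
          exact ⟨hz.1, lt_trans hbd hz.2⟩
        · intro hsup
          have hdmem : d ∈ (hfin.insert dflt).toFinset.filter (fun c => b.1 < c.1) := by
            rw [Finset.mem_filter]
            exact ⟨(hfin.insert dflt).mem_toFinset.mpr hdCB, hbd⟩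
          have h := hsup hdmem
          rw [Finset.mem_filter] at h
          exact absurd h.2 (lt_irrefl _)
      have hcard' : ((hfin.insert dflt).toFinset.filter (fun c => d.1 < c.1)).card < n :=
        lt_of_lt_of_le (Finset.card_lt_card hsub) (Nat.lt_succ_iff.mp hcard)
      obtain ⟨cd, hcdCB, _, _, hcdatt, i, hcdG⟩ := ih d hdCB hdN hd2 hcard'
      exact ⟨i, Sum.inl cd, hcdG, hcdatt⟩
    have hQ : ∀ d ∈ (hfin.insert dflt).toFinset.filter
        (fun d => caseAttacks (insert dflt S) d c ∧ d.1 ≤ N),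
        ∃ i, ∃ z ∈ Gseq (minedArgs S dflt) (attack (insert dflt S) N) i,
          attack (insert dflt S) N z (Sum.inl d) := by
      intro d hd
      rw [Finset.mem_filter] at hd
      exact hdef d ((hfin.insert dflt).mem_toFinset.mp hd.1) hd.2.1 hd.2.2
    obtain ⟨k, hk⟩ := exists_uniform_stage
      (fun d i => ∃ z ∈ Gseq (minedArgs S dflt) (attack (insert dflt S) N) i,
        attack (insert dflt S) N z (Sum.inl d))
      (fun d i j hij h => by
        obtain ⟨z, hz, hzd⟩ := h
        exact ⟨z, Gseq_mono _ _ hij hz, hzd⟩)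
      _ hQ
    refine ⟨c, hcCB, hcN, hc2, hatt, k+1, mem_minedArgs_inl.mpr hcCB, ?_⟩
    intro b' hb' hatt'
    rcases b' with d | u
    · by_cases hdN : d.1 ≤ N
      · refine hk d ?_
        rw [Finset.mem_filter]
        exact ⟨(hfin.insert dflt).mem_toFinset.mpr (mem_minedArgs_inl.mp hb'), hatt', hdN⟩
      · exact ⟨Sum.inr (), Gseq_mono _ _ (Nat.zero_le _) (inr_mem_G0 S dflt N), hdN⟩
    · exact absurd hcN hatt'

lemma aacbr_exact (S : Set (Case X)) (hfin : S.Finite) (dflt : Case X)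
    (hd : ∀ x : X, dflt.1 ≤ x) (N : X) (y : Bool)
    (hy : (N, y) ∈ S) (hny : (N, !y) ∉ S) :
    aacbrOutcome S dflt N = y := by
  by_cases hdy : dflt.2 = y
  · -- default has the outcome y: show it is in the grounded extension
    have hnyCB : (N, !y) ∉ insert dflt S := by
      intro h
      rcases h with h | h
      · have h2 : dflt.2 = !y := by rw [← h]
        rw [hdy] at h2
        exact bool_ne_not y h2
      · exact hny h
    have hQ : ∀ d ∈ (hfin.insert dflt).toFinset.filter
        (fun d => caseAttacks (insert dflt S) d dflt ∧ d.1 ≤ N),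
        ∃ i, ∃ z ∈ Gseq (minedArgs S dflt) (attack (insert dflt S) N) i,
          attack (insert dflt S) N z (Sum.inl d) := by
      intro d hd'
      rw [Finset.mem_filter] at hd'
      obtain ⟨hdF, hdatt, hdN⟩ := hd'
      have hd2 : d.2 = !y := by
        have h := hdatt.1
        rw [hdy] at h
        exact bool_eq_not h
      obtain ⟨c, _, _, _, hcatt, i, hcG⟩ := claim_i S hfin dflt N y
        (Set.mem_insert_of_mem _ hy) hnyCB
        (((hfin.insert dflt).toFinset.filter (fun c => d.1 < c.1)).card + 1) d
        ((hfin.insert dflt).mem_toFinset.mp hdF) hdN hd2 (Nat.lt_succ_self _)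
      exact ⟨i, Sum.inl c, hcG, hcatt⟩
    obtain ⟨k, hk⟩ := exists_uniform_stage
      (fun d i => ∃ z ∈ Gseq (minedArgs S dflt) (attack (insert dflt S) N) i,
        attack (insert dflt S) N z (Sum.inl d))
      (fun d i j hij h => by
        obtain ⟨z, hz, hzd⟩ := h
        exact ⟨z, Gseq_mono _ _ hij hz, hzd⟩)
      _ hQ
    have hdfltG : Sum.inl dflt ∈
        Gseq (minedArgs S dflt) (attack (insert dflt S) N) (k+1) := by
      refine ⟨mem_minedArgs_inl.mpr (Set.mem_insert _ _), ?_⟩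
      intro b hb hatt
      rcases b with d | u
      · by_cases hdN : d.1 ≤ N
        · refine hk d ?_
          rw [Finset.mem_filter]
          exact ⟨(hfin.insert dflt).mem_toFinset.mpr (mem_minedArgs_inl.mp hb), hatt, hdN⟩
        · exact ⟨Sum.inr (), Gseq_mono _ _ (Nat.zero_le _) (inr_mem_G0 S dflt N), hdN⟩
      · exact absurd (hd N) hatt
    have hmem : Sum.inl dflt ∈ minedGrounded S dflt N :=
      Set.mem_iUnion.mpr ⟨k+1, hdfltG⟩
    rw [aacbrOutcome, if_pos hmem, hdy]
  · have hd2 : dflt.2 = !y := bool_eq_not hdy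
    by_cases hdfl : dflt = (N, !y)
    · -- dflt itself is the exact opposite case: descent argument
      have hattack : caseAttacks (insert dflt S) (N, y) dflt := by
        refine ⟨?_, hd N, ?_⟩
        · show y ≠ dflt.2
          rw [hd2]
          exact bool_ne_not y
        · rintro ⟨g, hg, hg1, hg2, hg3⟩
          rw [hdfl] at hg2
          exact absurd hg1 (not_lt_of_gt hg2)
      have hnot : ∀ i, Sum.inl dflt ∉
          Gseq (minedArgs S dflt) (attack (insert dflt S) N) i := by
        intro i
        induction i with
        | zero =>
          intro h
          exact h.2 (Sum.inl (N, y))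
            (mem_minedArgs_inl.mpr (Set.mem_insert_of_mem _ hy)) hattack
        | succ i ihh =>
          intro h
          obtain ⟨z, hz, hzatt⟩ := h.2 (Sum.inl (N, y))
            (mem_minedArgs_inl.mpr (Set.mem_insert_of_mem _ hy)) hattack
          rcases z with d | u
          · have hdN : d.1 ≤ N := by
              by_contra hc
              exact irrelevant_not_mem hc i hz
            have hdN' : N ≤ d.1 := hzatt.2.1
            have hdeq : d.1 = N := le_antisymm hdN hdN'
            have hd2' : d.2 = !y := bool_eq_not hzatt.1
            have : d = dflt := by
              rw [hdfl]
              exact Prod.ext_iff.mpr ⟨hdeq, hd2'⟩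
            rw [this] at hz
            exact ihh hz
          · exact hzatt (le_refl N)
      have hmem : Sum.inl dflt ∉ minedGrounded S dflt N := by
        intro h
        obtain ⟨T, ⟨i, rfl⟩, hi⟩ := h
        exact hnot i hi
      rw [aacbrOutcome, if_neg hmem, hd2, Bool.not_not]
    · -- dflt is strictly below N; it is attacked by a grounded argument
      have hnyCB : (N, !y) ∉ insert dflt S := by
        intro h
        rcases h with h | h
        · exact hdfl h.symm
        · exact hny h
      have hdltN : dflt.1 < N := by
        refine lt_of_le_of_ne (hd N) (fun h => hdfl (Prod.ext_iff.mpr ⟨h, hd2⟩))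
      obtain ⟨c, _, _, _, hcatt, i, hcG⟩ := claim_i S hfin dflt N y
        (Set.mem_insert_of_mem _ hy) hnyCB
        (((hfin.insert dflt).toFinset.filter (fun c => dflt.1 < c.1)).card + 1) dflt
        (Set.mem_insert _ _) (hd N) hd2 (Nat.lt_succ_self _)
      have hmem : Sum.inl dflt ∉ minedGrounded S dflt N := by
        intro h
        obtain ⟨T, ⟨j, rfl⟩, hj⟩ := h
        exact Gseq_not_attacked _ _ j (Sum.inl dflt) hj i (Sum.inl c) hcG hcatt
      rw [aacbrOutcome, if_neg hmem, hd2, Bool.not_not]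

end Exact
section Main
variable {X : Type*} [PartialOrder X]

lemma mem_concise {dflt : Case X} {D' D : Set (Case X)} (h : Concise dflt D' D)
    {e : Case X} (he : e ∈ D') : e ∈ D ∧ Includable dflt D' e := by
  rw [h] at he; exact he

lemma mem_of_includable {dflt : Case X} {D' D : Set (Case X)} (h : Concise dflt D' D)
    {e : Case X} (he : e ∈ D) (hinc : Includable dflt D' e) : e ∈ D' := by
  rw [h]; exact ⟨he, hinc⟩

lemma no_min (D : Set (Case X)) (hfin : D.Finite) (dflt : Case X)
    (hd : ∀ x : X, dflt.1 ≤ x)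
    (D' D'' : Set (Case X)) (hD' : D' ⊆ D) (hD'' : D'' ⊆ D)
    (h1 : Concise dflt D' D) (h2 : Concise dflt D'' D)
    (e : Case X) (he1 : e ∈ D') (he2 : e ∉ D'')
    (hmin : ∀ f : Case X, (f ∈ D' ∧ f ∉ D'') ∨ (f ∈ D'' ∧ f ∉ D') → ¬ f.1 < e.1) :
    False := by
  obtain ⟨x, y⟩ := e
  have hclass : ∀ c : Case X, c.1 ≤ x → c.1 < x ∨ c = (x, y) ∨ c = (x, !y) := by
    intro c hc
    rcases lt_or_eq_of_le hc with h | h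
    · exact Or.inl h
    · right
      have h2 : c.2 = y ∨ c.2 = !y := by cases c.2 <;> cases y <;> simp
      rcases h2 with h2 | h2
      · exact Or.inl (Prod.ext_iff.mpr ⟨h, h2⟩)
      · exact Or.inr (Prod.ext_iff.mpr ⟨h, h2⟩)
  have hbelow : ∀ c : Case X, c.1 < x → (c ∈ D' ↔ c ∈ D'') := by
    intro c hc
    constructor
    · intro h; by_contra h'; exact hmin c (Or.inl ⟨h, h'⟩) hc
    · intro h; by_contra h'; exact hmin c (Or.inr ⟨h, h'⟩) hc
  have hne' : ((x, !y) : Case X) ∉ D' := by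
    intro h
    have s1 : aacbrOutcome (insert ((x, y) : Case X) D') dflt x = y :=
      (mem_concise h1 he1).2.2
    have s2 : aacbrOutcome (insert ((x, !y) : Case X) D') dflt x = !y :=
      (mem_concise h1 h).2.2
    rw [Set.insert_eq_of_mem he1] at s1
    rw [Set.insert_eq_of_mem h] at s2
    rw [s1] at s2
    exact bool_ne_not y s2
  have hsurp1 : aacbrOutcome (D' \ {((x, y) : Case X)}) dflt x ≠ y :=
    (mem_concise h1 he1).2.1
  have hdlex : dflt.1 ≤ x := hd x
  have E1 : restrict (D' \ {((x, y) : Case X)}) x =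
      restrict (D'' \ {((x, !y) : Case X)}) x := by
    ext c
    simp only [restrict, Set.mem_setOf_eq, Set.mem_diff, Set.mem_singleton_iff]
    constructor
    · rintro ⟨⟨hc1, hc2⟩, hc3⟩
      rcases hclass c hc3 with h | h | h
      · refine ⟨⟨(hbelow c h).mp hc1, fun hh => ?_⟩, hc3⟩
        rw [hh] at h
        exact lt_irrefl x h
      · exact absurd h hc2
      · exact absurd (h ▸ hc1) hne'
    · rintro ⟨⟨hc1, hc2⟩, hc3⟩
      rcases hclass c hc3 with h | h | h
      · refine ⟨⟨(hbelow c h).mpr hc1, fun hh => ?_⟩, hc3⟩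
        rw [hh] at h
        exact lt_irrefl x h
      · exact absurd (h ▸ hc1) he2
      · exact absurd h hc2
  have hBval : aacbrOutcome (D'' \ {((x, !y) : Case X)}) dflt x = !y := by
    rw [← aacbr_congr dflt hdlex E1]
    exact bool_eq_not hsurp1
  by_cases he'2 : ((x, !y) : Case X) ∈ D''
  · have hsurp2 : aacbrOutcome (D'' \ {((x, !y) : Case X)}) dflt x ≠ !y :=
      (mem_concise h2 he'2).2.1
    exact hsurp2 hBval
  · have E2 : restrict D'' x = restrict (D' \ {((x, y) : Case X)}) x := by
      ext c
      simp only [restrict, Set.mem_setOf_eq, Set.mem_diff, Set.mem_singleton_iff]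
      constructor
      · rintro ⟨hc1, hc3⟩
        rcases hclass c hc3 with h | h | h
        · refine ⟨⟨(hbelow c h).mpr hc1, fun hh => ?_⟩, hc3⟩
          rw [hh] at h
          exact lt_irrefl x h
        · exact absurd (h ▸ hc1) he2
        · exact absurd (h ▸ hc1) he'2
      · rintro ⟨⟨hc1, hc2⟩, hc3⟩
        rcases hclass c hc3 with h | h | h
        · exact ⟨(hbelow c h).mp hc1, hc3⟩
        · exact absurd h hc2
        · exact absurd (h ▸ hc1) hne'
    have hsurpD'' : Surprising dflt D'' ((x, y) : Case X) := by
      show aacbrOutcome (D'' \ {((x, y) : Case X)}) dflt x ≠ y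
      rw [Set.diff_singleton_eq_self he2, aacbr_congr dflt hdlex E2]
      exact hsurp1
    have hsuffD'' : Sufficient dflt D'' ((x, y) : Case X) := by
      show aacbrOutcome (insert ((x, y) : Case X) D'') dflt x = y
      refine aacbr_exact _ ((hfin.subset hD'').insert _) dflt hd x y
        (Set.mem_insert _ _) ?_
      intro h
      rcases h with h | h
      · exact bool_ne_not y (congrArg Prod.snd h).symm
      · exact he'2 h
    exact he2 (mem_of_includable h2 (hD' he1) ⟨hsurpD'', hsuffD''⟩)

end Main

theorem concise_subset_unique' {X : Type*} [PartialOrder X]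
    (D : Set (Case X)) (hfin : D.Finite)
    (dflt : Case X) (hd : ∀ x : X, dflt.1 ≤ x)
    (D' D'' : Set (Case X)) (hD' : D' ⊆ D) (hD'' : D'' ⊆ D)
    (h1 : Concise dflt D' D) (h2 : Concise dflt D'' D) :
    D' = D'' := by
  by_contra hne
  have hdiff : ((D' \ D'') ∪ (D'' \ D')).Nonempty := by
    rw [Set.nonempty_iff_ne_empty]
    intro h
    rw [Set.union_empty_iff] at h
    exact hne (Set.Subset.antisymm (Set.diff_eq_empty.mp h.1) (Set.diff_eq_empty.mp h.2))
  have hfinΔ : ((D' \ D'') ∪ (D'' \ D')).Finite :=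
    hfin.subset (Set.union_subset (fun a ha => hD' ha.1) (fun a ha => hD'' ha.1))
  have hneF : (hfinΔ.toFinset.image Prod.fst).Nonempty := by
    obtain ⟨a, ha⟩ := hdiff
    exact ⟨a.1, Finset.mem_image_of_mem _ (hfinΔ.mem_toFinset.mpr ha)⟩
  obtain ⟨x0, hx0mem, hx0min⟩ := (hfinΔ.toFinset.image Prod.fst).exists_minimal hneF
  obtain ⟨e, heΔ, hex⟩ := Finset.mem_image.mp hx0mem
  have heΔ' := hfinΔ.mem_toFinset.mp heΔ
  have hmin : ∀ f : Case X, (f ∈ D' ∧ f ∉ D'') ∨ (f ∈ D'' ∧ f ∉ D') → ¬ f.1 < e.1 := by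
    intro f hf hlt
    rw [hex] at hlt
    refine (fun hy : f.1 ∈ hfinΔ.toFinset.image Prod.fst => lt_irrefl _ (lt_of_lt_of_le hlt (hx0min hy hlt.le))) ?_
    refine Finset.mem_image_of_mem _ (hfinΔ.mem_toFinset.mpr ?_)
    rcases hf with h | h
    · exact Or.inl h
    · exact Or.inr h
  rcases heΔ' with h | h
  · exact no_min D hfin dflt hd D' D'' hD' hD'' h1 h2 e h.1 h.2 hmin
  · exact no_min D hfin dflt hd D'' D' hD'' hD' h2 h1 e h.1 h.2
      (fun f hf => hmin f (Or.symm hf))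

/-- Uniqueness of concise subsets: for regular AACBR, any two concise subsets of a
(finite) casebase `D` w.r.t. `D` are equal. -/
theorem concise_subset_unique {X : Type*} [PartialOrder X]
    (D : Set (Case X)) (hfin : D.Finite)
    (dflt : Case X) (hd : ∀ x : X, dflt.1 ≤ x)
    (D' D'' : Set (Case X)) (hD' : D' ⊆ D) (hD'' : D'' ⊆ D)
    (h1 : Concise dflt D' D) (h2 : Concise dflt D'' D) :
    D' = D'' := by
  exact concise_subset_unique' D hfin dflt hd D' D'' hD' hD'' h1 h2
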